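/- For every integer n ≥ 2, the sum over k from 2 to n of H_k/((k+2)(k+1)k(k−1)) equals (23n^2+57n+28)/(36(n+1)(n+2)) − H_{n+1}/(3n(n+1)(n+2)) − (1/3)·H_{n+1}^{(2)}. -/

import Mathlib

/-- The `n`-th harmonic number `H_n = ∑_{k=1}^n 1/k`, with `H_0 = 0`. -/
def H (n : ℕ) : ℚ := ∑ k ∈ Finset.range n, 1 / ((k : ℚ) + 1)

/-- The generalized harmonic number of order 2, `H_n^{(2)} = ∑_{k=1}^n 1/k^2`, with `H_0^{(2)} = 0`. -/
def H2 (n : ℕ) : ℚ := ∑ k ∈ Finset.range n, 1 / ((k : ℚ) + 1) ^ 2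

lemma H_succ (n : ℕ) : H (n + 1) = H n + 1 / ((n : ℚ) + 1) := by
  simp [H, Finset.sum_range_succ]

lemma H2_succ (n : ℕ) : H2 (n + 1) = H2 n + 1 / ((n : ℚ) + 1) ^ 2 := by
  simp [H2, Finset.sum_range_succ]

theorem stmt_12 (n : ℕ) (hn : 2 ≤ n) :
    ∑ k ∈ Finset.Icc 2 n, H k / (((k : ℚ) + 2) * ((k : ℚ) + 1) * (k : ℚ) * ((k : ℚ) - 1)) =
      (23 * (n : ℚ) ^ 2 + 57 * (n : ℚ) + 28) / (36 * ((n : ℚ) + 1) * ((n : ℚ) + 2))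
        - H (n + 1) / (3 * (n : ℚ) * ((n : ℚ) + 1) * ((n : ℚ) + 2))
        - (1 / 3) * H2 (n + 1) := by
  induction n with
  | zero => omega
  | succ m ih =>
    rcases Nat.lt_or_ge m 2 with hm | hm
    · interval_cases m
      · omega
      · simp only [show (1:ℕ)+1 = 2 by rfl]
        rw [Finset.Icc_self, Finset.sum_singleton]
        simp [H, H2, Finset.sum_range_succ]
        norm_num
    · rw [Finset.sum_Icc_succ_top (by omega : 2 ≤ m + 1), ih hm]
      have hm0 : (m : ℚ) ≠ 0 := by positivity
      have hm1 : (m : ℚ) + 1 ≠ 0 := by positivity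
      have hm2 : (m : ℚ) + 2 ≠ 0 := by positivity
      have hm3 : (m : ℚ) + 3 ≠ 0 := by positivity
      push_cast
      rw [H_succ (m + 1), H2_succ (m + 1)]
      push_cast
      field_simp
      ring_nf
      field_simp
      ring
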